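/- Let M > 1, let ε ∈ (0,1), let A be an n×n real symmetric nonsingular matrix with condition number ‖A‖·‖A^{−1}‖ ≤ M, and let b ∈ ℝ^n with ‖b‖ = 1. If the integer k satisfies k ≥ 2 ⌈ ln((1 + √(1−ε²))/ε) / ln((M + 1)/(M − 1)) ⌉, then there exists x in the Krylov subspace span{b, Ab, …, A^{k−1} b} with ‖A x − b‖ ≤ ε. That is, for the class F₂ of symmetric matrices with condition number at most M (without positive definiteness), the minimal residual algorithm computes an ε-approximation within 2⌈ln((1+(1−ε²)^{1/2})/ε) / ln((M+1)/(M−1))⌉ Krylov steps. -/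

import Mathlib

open Polynomial in
lemma chebT_natDegree_le (m : ℕ) : (Polynomial.Chebyshev.T ℝ (m : ℤ)).natDegree ≤ m := by
  induction m using Nat.twoStepInduction with
  | zero => simp [Polynomial.Chebyshev.T_zero]
  | one => simp [Polynomial.Chebyshev.T_one]
  | more m ih1 ih2 =>
    have h : ((m + 2 : ℕ) : ℤ) = (m : ℤ) + 2 := by push_cast; ring
    rw [h, Polynomial.Chebyshev.T_add_two]
    refine (natDegree_sub_le _ _).trans ?_
    have h1 : (2 * X * Polynomial.Chebyshev.T ℝ ((m : ℤ) + 1)).natDegree ≤ m + 2 := by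
      refine (natDegree_mul_le).trans ?_
      have h2 : (2 * X : ℝ[X]).natDegree ≤ 1 := by
        refine (natDegree_mul_le).trans ?_
        simp
      have h3 : ((m : ℤ) + 1) = ((m + 1 : ℕ) : ℤ) := by push_cast; ring
      rw [h3]
      omega
    have h4 : (Polynomial.Chebyshev.T ℝ (m : ℤ)).natDegree ≤ m + 2 := ih1.trans (by omega)
    omega

lemma chebT_eval_cosh (m : ℤ) (t : ℝ) :
    (Polynomial.Chebyshev.T ℝ m).eval (Real.cosh t) = Real.cosh (m * t) := by
  have h := Polynomial.Chebyshev.T_complex_cos ((t : ℂ) * Complex.I) m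
  rw [Complex.cos_mul_I] at h
  have h2 : (m : ℂ) * ((t : ℂ) * Complex.I) = ((m * t : ℝ) : ℂ) * Complex.I := by
    push_cast; ring
  rw [h2, Complex.cos_mul_I] at h
  have h3 := Polynomial.Chebyshev.complex_ofReal_eval_T (Real.cosh t) m
  rw [Complex.ofReal_cosh, h, ← Complex.ofReal_cosh] at h3
  exact_mod_cast h3

lemma chebT_abs_le (m : ℤ) {x : ℝ} (h1 : -1 ≤ x) (h2 : x ≤ 1) :
    |(Polynomial.Chebyshev.T ℝ m).eval x| ≤ 1 := by
  rw [← Real.cos_arccos h1 h2, Polynomial.Chebyshev.T_real_cos]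
  exact Real.abs_cos_le_one _

lemma add_inv_mono {s t : ℝ} (hs : 1 ≤ s) (hst : s ≤ t) : s + s⁻¹ ≤ t + t⁻¹ := by
  have h1 : (0:ℝ) < s := by linarith
  have h2 : (0:ℝ) < t := by linarith
  have h3 : s⁻¹ - t⁻¹ = (t - s) * (s * t)⁻¹ := by field_simp
  have h5 : (s * t)⁻¹ ≤ 1 := by
    rw [inv_le_one₀ (by positivity)]; nlinarith
  nlinarith [mul_le_of_le_one_right (sub_nonneg.2 hst) h5]

lemma pow_mulVec_eigen {n : ℕ} (A : Matrix (Fin n) (Fin n) ℝ) {v : Fin n → ℝ} {μ : ℝ}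
    (hv : A.mulVec v = μ • v) : ∀ k : ℕ, (A ^ k).mulVec v = (μ ^ k) • v := by
  intro k
  induction k with
  | zero => simp [Matrix.one_mulVec]
  | succ k ih =>
    rw [pow_succ, ← Matrix.mulVec_mulVec, hv, Matrix.mulVec_smul, ih, smul_smul, pow_succ]
    ring_nf

lemma mySum_mulVec {n : ℕ} (f : ℕ → Matrix (Fin n) (Fin n) ℝ) (N : ℕ) (b : Fin n → ℝ) :
    (∑ i ∈ Finset.range N, f i).mulVec b = ∑ i ∈ Finset.range N, (f i).mulVec b := by
  induction N with
  | zero => simp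
  | succ N ih => rw [Finset.sum_range_succ, Finset.sum_range_succ, Matrix.add_mulVec, ih]

lemma aeval_mulVec {n N : ℕ} (A : Matrix (Fin n) (Fin n) ℝ) (p : Polynomial ℝ)
    (hp : p.natDegree < N) (b : Fin n → ℝ) :
    (Polynomial.aeval A p).mulVec b
      = ∑ i ∈ Finset.range N, p.coeff i • (A ^ i).mulVec b := by
  rw [Polynomial.aeval_eq_sum_range' hp]
  rw [mySum_mulVec]
  simp [Matrix.smul_mulVec]

lemma aeval_mulVec_eigen {n : ℕ} (A : Matrix (Fin n) (Fin n) ℝ) {v : Fin n → ℝ} {μ : ℝ}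
    (hv : A.mulVec v = μ • v) (p : Polynomial ℝ) :
    (Polynomial.aeval A p).mulVec v = p.eval μ • v := by
  rw [aeval_mulVec A p (Nat.lt_succ_self _) v, Polynomial.eval_eq_sum_range]
  simp only [pow_mulVec_eigen A hv, smul_smul, Finset.sum_smul]

lemma euclNorm' {n : ℕ} (v : Fin n → ℝ) :
    Real.sqrt (∑ i, v i ^ 2) = ‖(WithLp.equiv 2 (Fin n → ℝ)).symm v‖ := by
  rw [EuclideanSpace.norm_eq]
  simp [Real.norm_eq_abs, sq_abs]



/-- The Euclidean norm on `ℝ^n`. -/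
noncomputable def euclNorm {n : ℕ} (v : Fin n → ℝ) : ℝ := Real.sqrt (∑ i, v i ^ 2)

/-- The spectral norm of an `n × n` real matrix: the operator norm induced by the
Euclidean norm. -/
noncomputable def specNorm {n : ℕ} (A : Matrix (Fin n) (Fin n) ℝ) : ℝ :=
  ‖LinearMap.toContinuousLinearMap (Matrix.toEuclideanLin A)‖

set_option maxHeartbeats 2000000 in
set_option synthInstance.maxHeartbeats 200000 in
/-- **Step count of the minimal residual algorithm on the class `F₂`.**
Let `A` be symmetric nonsingular with condition number `‖A‖·‖A⁻¹‖ ≤ M` and let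
`‖b‖ = 1`.  If `k ≥ 2⌈ln((1+√(1−ε²))/ε) / ln((M+1)/(M−1))⌉` then the Krylov subspace
`span{b, Ab, …, A^{k−1}b}` contains a vector `x` with residual `‖Ax − b‖ ≤ ε`. -/
theorem stmt_14 (n : ℕ) (M ε : ℝ) (hM : 1 < M) (hε : ε ∈ Set.Ioo (0 : ℝ) 1)
    (A : Matrix (Fin n) (Fin n) ℝ) (hA : A.IsSymm) (hA' : IsUnit A)
    (hcond : specNorm A * specNorm A⁻¹ ≤ M)
    (b : Fin n → ℝ) (hb : euclNorm b = 1) (k : ℕ)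
    (hk : 2 * ⌈Real.log ((1 + Real.sqrt (1 - ε ^ 2)) / ε) /
        Real.log ((M + 1) / (M - 1))⌉₊ ≤ k) :
    ∃ x ∈ Submodule.span ℝ (Set.range fun i : Fin k => (A ^ (i : ℕ)).mulVec b),
      euclNorm (A.mulVec x - b) ≤ ε := by
  obtain ⟨hε0, hε1⟩ := hε
  rcases Nat.eq_zero_or_pos n with hn | hn
  · exfalso; subst hn; simpa [euclNorm] using hb
  set m : ℕ := ⌈Real.log ((1 + Real.sqrt (1 - ε ^ 2)) / ε) /
      Real.log ((M + 1) / (M - 1))⌉₊ with hm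
  -- numeric setup
  have hM1 : (0:ℝ) < M - 1 := by linarith
  set ρ : ℝ := (M + 1) / (M - 1) with hρdef
  have hρ : 1 < ρ := by rw [hρdef, lt_div_iff₀ hM1]; linarith
  have hρ0 : (0:ℝ) < ρ := by linarith
  have hsqnn : 0 ≤ Real.sqrt (1 - ε ^ 2) := Real.sqrt_nonneg _
  have hsq : Real.sqrt (1 - ε ^ 2) ^ 2 = 1 - ε ^ 2 := Real.sq_sqrt (by nlinarith)
  set s : ℝ := (1 + Real.sqrt (1 - ε ^ 2)) / ε with hsdef
  have hs1 : 1 < s := by rw [hsdef, lt_div_iff₀ hε0]; nlinarith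
  have hm1 : 1 ≤ m := Nat.one_le_ceil_iff.2
    (div_pos (Real.log_pos hs1) (Real.log_pos hρ))
  have hρm : s ≤ ρ ^ m := by
    have h1 : Real.log s / Real.log ρ ≤ (m : ℝ) := Nat.le_ceil _
    have h2 : Real.log s ≤ (m : ℝ) * Real.log ρ :=
      (div_le_iff₀ (Real.log_pos hρ)).1 h1
    calc s = Real.exp (Real.log s) := (Real.exp_log (by positivity)).symm
      _ ≤ Real.exp ((m : ℝ) * Real.log ρ) := Real.exp_le_exp.2 h2
      _ = ρ ^ m := by rw [← Real.log_pow, Real.exp_log (by positivity)]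
  -- spectral setup
  have hdet : IsUnit A.det := (Matrix.isUnit_iff_isUnit_det A).1 hA'
  have hAinv : A⁻¹ * A = 1 := Matrix.nonsing_inv_mul A hdet
  have hherm : A.IsHermitian := by
    rw [Matrix.IsHermitian]
    ext i j
    simpa [Matrix.conjTranspose_apply] using congrFun (congrFun hA i) j
  have hsymm : (Matrix.toEuclideanLin A).IsSymmetric :=
    Matrix.isHermitian_iff_isSymmetric.1 hherm
  set B := hsymm.eigenvectorBasis finrank_euclideanSpace_fin with hB
  set μ := hsymm.eigenvalues finrank_euclideanSpace_fin with hμ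
  have hBeig : ∀ i, Matrix.toEuclideanLin A (B i) = μ i • B i := fun i => by
    simp [hB, hμ]
  set vfun : Fin n → Fin n → ℝ := fun i => WithLp.equiv 2 (Fin n → ℝ) (B i) with hvfun
  have hveig : ∀ i, A.mulVec (vfun i) = μ i • vfun i := by
    intro i
    have h := congrArg (WithLp.equiv 2 (Fin n → ℝ)) (hBeig i)
    rw [WithLp.equiv_apply, Matrix.ofLp_toEuclideanLin_apply] at h
    simpa [hvfun] using h
  have hvnorm : ∀ i, ‖B i‖ = 1 := fun i => B.orthonormal.1 i
  have hμub : ∀ i, |μ i| ≤ specNorm A := by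
    intro i
    have h := (LinearMap.toContinuousLinearMap (Matrix.toEuclideanLin A)).le_opNorm (B i)
    rw [LinearMap.coe_toContinuousLinearMap', hBeig i, norm_smul, hvnorm i] at h
    simpa [specNorm, Real.norm_eq_abs] using h
  have hAinvA : ∀ x : EuclideanSpace ℝ (Fin n),
      Matrix.toEuclideanLin A⁻¹ (Matrix.toEuclideanLin A x) = x := by
    intro x
    apply (WithLp.equiv 2 (Fin n → ℝ)).injective
    rw [WithLp.equiv_apply, WithLp.equiv_apply, Matrix.ofLp_toEuclideanLin_apply, Matrix.ofLp_toEuclideanLin_apply,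
      Matrix.mulVec_mulVec, hAinv, Matrix.one_mulVec]
  have hμlb : ∀ i, 1 ≤ specNorm A⁻¹ * |μ i| := by
    intro i
    have hBi : Matrix.toEuclideanLin A⁻¹ (μ i • B i) = B i := by
      rw [← hBeig i]; exact hAinvA _
    have h := (LinearMap.toContinuousLinearMap (Matrix.toEuclideanLin A⁻¹)).le_opNorm
      (μ i • B i)
    rw [LinearMap.coe_toContinuousLinearMap', hBi, hvnorm i, norm_smul, hvnorm i,
      mul_one] at h
    simpa [specNorm, Real.norm_eq_abs] using h
  have hinv0 : 0 < specNorm A⁻¹ := by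
    obtain ⟨i⟩ : Nonempty (Fin n) := Fin.pos_iff_nonempty.1 hn
    nlinarith [hμlb i, abs_nonneg (μ i),
      (norm_nonneg _ : (0:ℝ) ≤ specNorm A⁻¹), hμub i,
      (norm_nonneg _ : (0:ℝ) ≤ specNorm A)]
  set m₀ : ℝ := (specNorm A⁻¹)⁻¹ with hm₀def
  have hm₀0 : 0 < m₀ := inv_pos.2 hinv0
  have hμlow : ∀ i, m₀ ≤ |μ i| := by
    intro i
    have h := hμlb i
    rw [hm₀def]
    rw [inv_le_iff_one_le_mul₀ hinv0]
    linarith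
  have hμup : ∀ i, |μ i| ≤ M * m₀ := by
    intro i
    have h2 : specNorm A ≤ M * m₀ := by
      rw [hm₀def, mul_comm, ← div_eq_inv_mul, le_div_iff₀ hinv0]
      linarith [hcond]
    linarith [hμub i]
  -- Chebyshev polynomial setup
  have hM2 : (0:ℝ) < M ^ 2 - 1 := by nlinarith
  set t₀ : ℝ := (M ^ 2 + 1) / (M ^ 2 - 1) with ht₀def
  have ht₀ : t₀ = Real.cosh (Real.log ρ) := by
    rw [Real.cosh_log hρ0, ht₀def, hρdef]
    field_simp
    ring
  set ev₀ : ℝ := (Polynomial.Chebyshev.T ℝ (m : ℤ)).eval t₀ with hev₀def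
  have hev : ev₀ = (ρ ^ m + (ρ ^ m)⁻¹) / 2 := by
    rw [hev₀def, ht₀, chebT_eval_cosh]
    have h1 : ((m : ℤ) : ℝ) * Real.log ρ = Real.log (ρ ^ m) := by
      rw [Real.log_pow]; push_cast; ring
    rw [h1, Real.cosh_log (by positivity)]
  have hsinv : s + s⁻¹ = 2 / ε := by
    rw [hsdef]
    rw [inv_div]
    rw [div_add_div _ _ (by positivity) (by positivity)]
    rw [div_eq_div_iff (by positivity) (by positivity)]
    nlinarith [hsq]
  have hev1 : 1 / ε ≤ ev₀ := by
    rw [hev]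
    have h2 := add_inv_mono hs1.le hρm
    have h3 : 2 / ε = 2 * (1 / ε) := by ring
    linarith [hsinv]
  have hev0' : (0:ℝ) < ev₀ := lt_of_lt_of_le (by positivity) hev1
  have hevinv : ev₀⁻¹ ≤ ε := by
    rw [inv_le_comm₀ hev0' hε0]
    rwa [one_div] at hev1
  set γ : ℝ := 2 / ((M ^ 2 - 1) * m₀ ^ 2) with hγdef
  have hγ0 : (0:ℝ) < γ := by positivity
  set r : Polynomial ℝ := Polynomial.C ev₀⁻¹ *
    ((Polynomial.Chebyshev.T ℝ (m : ℤ)).comp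
      (Polynomial.C t₀ - Polynomial.C γ * Polynomial.X)).comp (Polynomial.X ^ 2) with hrdef
  have hr_eval : ∀ y : ℝ, r.eval y
      = ev₀⁻¹ * (Polynomial.Chebyshev.T ℝ (m : ℤ)).eval (t₀ - γ * y ^ 2) := by
    intro y
    simp [hrdef, Polynomial.eval_comp]
  have hr0 : r.eval 0 = 1 := by
    rw [hr_eval]
    norm_num
    exact inv_mul_cancel₀ hev0'.ne'
  have hrbound : ∀ i, |r.eval (μ i)| ≤ ε := by
    intro i
    have habs := abs_nonneg (μ i)
    have hsqa : |μ i| ^ 2 = μ i ^ 2 := sq_abs _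
    have hx1 : -1 ≤ t₀ - γ * μ i ^ 2 := by
      have h1 : μ i ^ 2 ≤ M ^ 2 * m₀ ^ 2 := by nlinarith [hμup i]
      have key : t₀ - γ * (M ^ 2 * m₀ ^ 2) = -1 := by
        rw [ht₀def, hγdef]
        field_simp
        ring
      nlinarith [hγ0]
    have hx2 : t₀ - γ * μ i ^ 2 ≤ 1 := by
      have h1 : m₀ ^ 2 ≤ μ i ^ 2 := by nlinarith [hμlow i]
      have key : t₀ - γ * m₀ ^ 2 = 1 := by
        rw [ht₀def, hγdef]
        field_simp
        ring
      nlinarith [hγ0]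
    rw [hr_eval, abs_mul, abs_of_pos (inv_pos.2 hev0')]
    calc ev₀⁻¹ * |(Polynomial.Chebyshev.T ℝ (m : ℤ)).eval (t₀ - γ * μ i ^ 2)|
        ≤ ev₀⁻¹ * 1 := by
          exact mul_le_mul_of_nonneg_left (chebT_abs_le _ hx1 hx2) (by positivity)
      _ ≤ ε := by rw [mul_one]; exact hevinv
  have hrdeg : r.natDegree ≤ 2 * m := by
    rw [hrdef]
    refine (Polynomial.natDegree_C_mul_le _ _).trans ?_
    refine (Polynomial.natDegree_comp_le).trans ?_
    rw [Polynomial.natDegree_X_pow]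
    have h1 : ((Polynomial.Chebyshev.T ℝ (m : ℤ)).comp
        (Polynomial.C t₀ - Polynomial.C γ * Polynomial.X)).natDegree ≤ m := by
      refine (Polynomial.natDegree_comp_le).trans ?_
      have h2 : (Polynomial.C t₀ - Polynomial.C γ * Polynomial.X).natDegree ≤ 1 := by
        refine (Polynomial.natDegree_sub_le _ _).trans ?_
        simp [Polynomial.natDegree_C]
        exact (Polynomial.natDegree_C_mul_le _ _).trans (by simp)
      calc (Polynomial.Chebyshev.T ℝ (m : ℤ)).natDegree *
            (Polynomial.C t₀ - Polynomial.C γ * Polynomial.X).natDegree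
          ≤ m * 1 := Nat.mul_le_mul (chebT_natDegree_le m) h2
        _ = m := by ring
    omega
  -- the approximating polynomial q with X * q = 1 - r
  set q : Polynomial ℝ := (1 - r).divX with hqdef
  have hqX : Polynomial.X * q = 1 - r := by
    have h0 : (1 - r).coeff 0 = 0 := by
      rw [Polynomial.coeff_sub, Polynomial.coeff_one,
        Polynomial.coeff_zero_eq_eval_zero, hr0]
      norm_num
    have h1 := Polynomial.X_mul_divX_add (1 - r)
    rwa [h0, map_zero, add_zero] at h1
  have hqdeg : q.natDegree < k := by
    have h1 : q.natDegree = (1 - r).natDegree - 1 :=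
      Polynomial.natDegree_divX_eq_natDegree_tsub_one
    have h2 : (1 - r).natDegree ≤ 2 * m := by
      refine (Polynomial.natDegree_sub_le _ _).trans ?_
      simpa using hrdeg
    omega
  -- the candidate vector
  refine ⟨(Polynomial.aeval A q).mulVec b, ?_, ?_⟩
  · rw [aeval_mulVec A q hqdeg b]
    refine Submodule.sum_mem _ fun i hi => ?_
    refine Submodule.smul_mem _ _ (Submodule.subset_span ?_)
    exact ⟨⟨i, Finset.mem_range.1 hi⟩, rfl⟩
  -- residual bound
  · have hres : A.mulVec ((Polynomial.aeval A q).mulVec b) - b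
        = -((Polynomial.aeval A r).mulVec b) := by
      rw [Matrix.mulVec_mulVec]
      have h1 : A * Polynomial.aeval A q = Polynomial.aeval A (Polynomial.X * q) := by
        rw [map_mul, Polynomial.aeval_X]
      rw [h1, hqX, map_sub, map_one, Matrix.sub_mulVec, Matrix.one_mulVec]
      abel
    rw [hres]
    -- expand b in the eigenbasis
    set b' : EuclideanSpace ℝ (Fin n) := (WithLp.equiv 2 (Fin n → ℝ)).symm b with hb'def
    set c : Fin n → ℝ := fun i => B.repr b' i with hcdef
    have hbsum : b = ∑ i, c i • vfun i := by
      have h := congrArg (WithLp.linearEquiv 2 ℝ (Fin n → ℝ)) (B.sum_repr b')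
      rw [map_sum] at h
      simp only [map_smul, WithLp.linearEquiv_apply] at h
      have hbb : WithLp.equiv 2 (Fin n → ℝ) b' = b := by
        rw [hb'def]; exact Equiv.apply_symm_apply _ _
      rw [← hbb]
      exact h.symm
    have hw : (Polynomial.aeval A r).mulVec b
        = ∑ i, (c i * r.eval (μ i)) • vfun i := by
      calc (Polynomial.aeval A r).mulVec b
          = (Polynomial.aeval A r).mulVec (∑ i, c i • vfun i) := by rw [← hbsum]
        _ = ∑ i, c i • (Polynomial.aeval A r).mulVec (vfun i) := by
            rw [← Matrix.mulVecLin_apply, map_sum]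
            simp [Matrix.mulVecLin_apply]
        _ = ∑ i, (c i * r.eval (μ i)) • vfun i := by
            refine Finset.sum_congr rfl fun i _ => ?_
            rw [aeval_mulVec_eigen A (hveig i) r, smul_smul]
    -- compute the norm
    have hnormb : Real.sqrt (∑ i, c i ^ 2) = 1 := by
      have h2 : ‖B.repr b'‖ = ‖b'‖ := B.repr.norm_map b'
      rw [EuclideanSpace.norm_eq] at h2
      simp only [Real.norm_eq_abs, sq_abs] at h2
      have h3 : euclNorm b = ‖b'‖ := by rw [hb'def]; exact euclNorm' b
      simp only [hcdef]
      rw [h2, ← h3, hb]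
    have hcsum : ∑ i, c i ^ 2 = 1 := by
      have h0 : (0:ℝ) ≤ ∑ i, c i ^ 2 := by positivity
      nlinarith [Real.sq_sqrt h0, hnormb]
    have hwnorm : euclNorm (-((Polynomial.aeval A r).mulVec b)) ≤ ε := by
      rw [hw]
      set w : Fin n → ℝ := ∑ i, (c i * r.eval (μ i)) • vfun i with hwdef
      have hneg : euclNorm (-w) = euclNorm w := by
        simp [euclNorm, neg_sq]
      have hw' : (WithLp.linearEquiv 2 ℝ (Fin n → ℝ)).symm w
          = ∑ i, (c i * r.eval (μ i)) • B i := by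
        rw [hwdef, map_sum]
        refine Finset.sum_congr rfl fun i _ => ?_
        rw [map_smul]
        simp [WithLp.linearEquiv_symm_apply, hvfun]
      have hrepr : ∀ j, B.repr ((WithLp.linearEquiv 2 ℝ (Fin n → ℝ)).symm w) j
          = c j * r.eval (μ j) := by
        intro j
        rw [hw', map_sum]
        simp only [map_smul, OrthonormalBasis.repr_self]
        rw [WithLp.ofLp_sum]
        simp [PiLp.smul_apply, EuclideanSpace.single_apply, Finset.sum_ite_eq', Pi.single_apply]
      have hnw : euclNorm w = Real.sqrt (∑ j, (c j * r.eval (μ j)) ^ 2) := by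
        have h1 : euclNorm w = ‖(WithLp.equiv 2 (Fin n → ℝ)).symm w‖ := euclNorm' w
        have h2 : (WithLp.equiv 2 (Fin n → ℝ)).symm w
            = (WithLp.linearEquiv 2 ℝ (Fin n → ℝ)).symm w :=
          (WithLp.linearEquiv_symm_apply 2 ℝ (Fin n → ℝ) w).symm
        have h4 : ‖B.repr ((WithLp.linearEquiv 2 ℝ (Fin n → ℝ)).symm w)‖
            = ‖(WithLp.linearEquiv 2 ℝ (Fin n → ℝ)).symm w‖ := B.repr.norm_map _
        rw [EuclideanSpace.norm_eq] at h4
        simp only [Real.norm_eq_abs, sq_abs, hrepr] at h4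
        rw [h1, h2, ← h4]
      rw [hneg, hnw]
      have hstep : ∀ j, (c j * r.eval (μ j)) ^ 2 ≤ ε ^ 2 * c j ^ 2 := by
        intro j
        have h1 := hrbound j
        have h2 : r.eval (μ j) ^ 2 ≤ ε ^ 2 := by
          nlinarith [abs_nonneg (r.eval (μ j)), sq_abs (r.eval (μ j))]
        nlinarith [sq_nonneg (c j)]
      calc Real.sqrt (∑ j, (c j * r.eval (μ j)) ^ 2)
          ≤ Real.sqrt (∑ j, ε ^ 2 * c j ^ 2) :=
            Real.sqrt_le_sqrt (Finset.sum_le_sum fun j _ => hstep j)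
        _ = ε := by rw [← Finset.mul_sum, hcsum, mul_one, Real.sqrt_sq hε0.le]
    exact hwnorm
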